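/- arXiv:1707.00631 — 7 statements merged into one kernel-verified Lean document; each statement's English description precedes it below -/
import Mathlib

section
/- For a nonzero vector x = (a_1,...,a_n) in ℂ^n, the infimum of the squared ℓ2 distances from x/‖x‖_2 to the set of constant modulus vectors equals 2 - (2/(√n·‖x‖_2))·∑_{i=1}^n |a_i|, and this infimum is attained. -/
set_option maxHeartbeats 1000000

open Finset

theorem stmt1 {n : ℕ} (x : EuclideanSpace ℂ (Fin n)) (hx : x ≠ 0) :
    IsLeast {d : ℝ | ∃ y : EuclideanSpace ℂ (Fin n),
        (∀ i, ‖y i‖ = 1 / Real.sqrt n) ∧ d = ‖(‖x‖⁻¹ • x) - y‖ ^ 2}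
      (2 - 2 / (Real.sqrt n * ‖x‖) * ∑ i, ‖x i‖) := by
  have hn : 0 < n := by
    rcases Nat.eq_zero_or_pos n with h | h
    · subst h; exact absurd (Subsingleton.elim x 0) hx
    · exact h
  set s : ℝ := Real.sqrt n with hs_def
  have hs : 0 < s := Real.sqrt_pos.2 (by exact_mod_cast hn)
  have hs2 : s ^ 2 = (n : ℝ) := Real.sq_sqrt (by positivity)
  have hr : 0 < ‖x‖ := norm_pos_iff.2 hx
  set u : EuclideanSpace ℂ (Fin n) := ‖x‖⁻¹ • x with hu_def
  have hu_norm : ‖u‖ = 1 := by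
    rw [hu_def, norm_smul, norm_inv, norm_norm, inv_mul_cancel₀ hr.ne']
  have hui : ∀ i, u i = (‖x‖⁻¹ : ℝ) • x i := fun i => rfl
  -- key identity
  have key : ∀ y : EuclideanSpace ℂ (Fin n), (∀ i, ‖y i‖ = 1 / s) →
      ‖u - y‖ ^ 2 = 2 - 2 * Complex.re (inner ℂ u y) := by
    intro y hy
    have hynorm : ‖y‖ ^ 2 = 1 := by
      have := EuclideanSpace.norm_eq y
      rw [this, Real.sq_sqrt (by positivity)]
      simp only [hy]
      rw [Finset.sum_const, Finset.card_univ, Fintype.card_fin]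
      field_simp
      rw [hs2]
      rw [nsmul_eq_mul, mul_one_div_cancel (Nat.cast_ne_zero.2 hn.ne')]
    have := norm_sub_sq (𝕜 := ℂ) u y
    rw [this, hu_norm, hynorm]
    simp only [RCLike.re_to_complex]
    ring
  have hinner_re : ∀ y : EuclideanSpace ℂ (Fin n),
      Complex.re (inner ℂ u y) = ∑ i, Complex.re ((starRingEnd ℂ) (u i) * y i) := by
    intro y
    rw [PiLp.inner_apply]
    simp only [RCLike.inner_apply]
    simp only [mul_comm (WithLp.ofLp y _)]
    exact map_sum Complex.reCLM _ _
  constructor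
  · -- membership: witness
    refine ⟨WithLp.toLp 2 (fun i => ((s : ℂ))⁻¹ * (if x i = 0 then 1 else (‖x i‖ : ℂ)⁻¹ * x i)), ?_, ?_⟩
    · intro i
      simp only [PiLp.toLp_apply]
      rw [norm_mul, norm_inv, Complex.norm_real, Real.norm_of_nonneg hs.le]
      by_cases h : x i = 0
      · simp [h]
      · rw [if_neg h, norm_mul, norm_inv, Complex.norm_real,
          Real.norm_of_nonneg (norm_nonneg _), inv_mul_cancel₀ (norm_ne_zero_iff.2 h)]
        simp
    · rw [key _ ?hmod]
      case hmod =>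
        intro i
        simp only [PiLp.toLp_apply]
        rw [norm_mul, norm_inv, Complex.norm_real, Real.norm_of_nonneg hs.le]
        by_cases h : x i = 0
        · simp [h]
        · rw [if_neg h, norm_mul, norm_inv, Complex.norm_real,
            Real.norm_of_nonneg (norm_nonneg _), inv_mul_cancel₀ (norm_ne_zero_iff.2 h)]
          simp
      rw [hinner_re]
      have hterm : ∀ i, Complex.re ((starRingEnd ℂ) (u i) *
          (((s : ℂ))⁻¹ * (if x i = 0 then 1 else (‖x i‖ : ℂ)⁻¹ * x i)))
          = ‖x‖⁻¹ * s⁻¹ * ‖x i‖ := by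
        intro i
        rw [hui i]
        by_cases h : x i = 0
        · simp [h]
        · rw [if_neg h]
          have : (starRingEnd ℂ) ((‖x‖⁻¹ : ℝ) • x i) *
              (((s : ℂ))⁻¹ * ((‖x i‖ : ℂ)⁻¹ * x i))
              = ((‖x‖⁻¹ * s⁻¹ * ‖x i‖⁻¹ : ℝ) : ℂ) * ((starRingEnd ℂ) (x i) * x i) := by
            push_cast
            simp [Complex.real_smul, map_mul]
            ring
          rw [this, ← Complex.normSq_eq_conj_mul_self]
          rw [← Complex.ofReal_mul, Complex.ofReal_re]
          rw [Complex.normSq_eq_norm_sq]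
          have hxin : ‖x i‖ ≠ 0 := norm_ne_zero_iff.2 h
          rw [sq, mul_assoc (‖x‖⁻¹ * s⁻¹), ← mul_assoc (‖x i‖⁻¹), inv_mul_cancel₀ hxin,
            one_mul]
      simp only [PiLp.toLp_apply]
      rw [Finset.sum_congr rfl (fun i _ => hterm i), ← Finset.mul_sum]
      rw [div_eq_mul_inv, mul_inv, ]
      ring
  · -- lower bound
    rintro d ⟨y, hy, rfl⟩
    rw [key y hy, hinner_re]
    have hb : ∑ i, Complex.re ((starRingEnd ℂ) (u i) * y i)
        ≤ ∑ i, ‖x‖⁻¹ * s⁻¹ * ‖x i‖ := by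
      apply Finset.sum_le_sum
      intro i _
      calc Complex.re ((starRingEnd ℂ) (u i) * y i)
          ≤ ‖(starRingEnd ℂ) (u i) * y i‖ := Complex.re_le_norm _
        _ = ‖u i‖ * ‖y i‖ := by rw [norm_mul, RingHomIsometric.norm_map]
        _ = ‖x‖⁻¹ * s⁻¹ * ‖x i‖ := by
            rw [hui i, norm_smul, Real.norm_of_nonneg (by positivity), hy i]
            field_simp
    rw [← Finset.mul_sum] at hb
    have : 2 / (s * ‖x‖) * ∑ i, ‖x i‖ = 2 * (‖x‖⁻¹ * s⁻¹ * ∑ i, ‖x i‖) := by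
      rw [div_eq_mul_inv, mul_inv]
      ring
    rw [this]
    linarith
end

section
/- For a nonzero vector x in ℂ^n and real c ≥ 0, the minimum ℓ2 distance from x/‖x‖_2 to the set of constant modulus vectors equals √c if and only if ‖x‖_1 = (1 - c/2)·√n·‖x‖_2. -/
open Finset

theorem stmt2 {n : ℕ} (x : EuclideanSpace ℂ (Fin n)) (hx : x ≠ 0) (c : ℝ) (hc : 0 ≤ c) :
    IsLeast {d : ℝ | ∃ y : EuclideanSpace ℂ (Fin n),
        (∀ i, ‖y i‖ = 1 / Real.sqrt n) ∧ d = ‖(‖x‖⁻¹ • x) - y‖} (Real.sqrt c) ↔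
    (∑ i, ‖x i‖) = (1 - c / 2) * Real.sqrt n * ‖x‖ := by
  classical
  have hn : 0 < n := by
    rcases Nat.eq_zero_or_pos n with h | h
    · subst h; exact absurd (show x = 0 by ext i; exact i.elim0) hx
    · exact h
  have hn' : (0:ℝ) < n := by exact_mod_cast hn
  have hsn : 0 < Real.sqrt n := Real.sqrt_pos.2 hn'
  have hN : 0 < ‖x‖ := norm_pos_iff.2 hx
  have hP : 0 < Real.sqrt n * ‖x‖ := by positivity
  set u : EuclideanSpace ℂ (Fin n) := ‖x‖⁻¹ • x with hu
  have hui : ∀ i, ‖u i‖ = ‖x‖⁻¹ * ‖x i‖ := by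
    intro i
    simp only [hu, PiLp.smul_apply, norm_smul, Real.norm_eq_abs,
      abs_of_nonneg (inv_nonneg.2 hN.le)]
  have hnormu : ‖u‖ = 1 := by
    rw [hu, norm_smul, norm_inv, norm_norm, inv_mul_cancel₀ hN.ne']
  have hsumsq : ∑ i, ‖u i‖ ^ 2 = 1 := by
    have h2 : Real.sqrt (∑ i, ‖u i‖ ^ 2) = 1 := by
      rw [← EuclideanSpace.norm_eq u, hnormu]
    have h3 : (0:ℝ) ≤ ∑ i, ‖u i‖ ^ 2 :=
      Finset.sum_nonneg fun i _ => sq_nonneg (‖u i‖)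
    have h4 := Real.sq_sqrt h3
    rw [h2] at h4; linarith
  set m : ℝ := ∑ i, (‖u i‖ - (Real.sqrt n)⁻¹) ^ 2 with hmdef
  have hm0 : 0 ≤ m := Finset.sum_nonneg fun i _ => sq_nonneg _
  have hm : m = 2 - 2 * ((∑ i, ‖x i‖) / (Real.sqrt n * ‖x‖)) := by
    have h1 : ∑ i, ‖u i‖ = ‖x‖⁻¹ * ∑ i, ‖x i‖ := by
      rw [Finset.mul_sum]; exact Finset.sum_congr rfl fun i _ => hui i
    have h2 : ((Real.sqrt n)⁻¹) ^ 2 = (n:ℝ)⁻¹ := by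
      rw [← Real.sqrt_inv]; exact Real.sq_sqrt (by positivity)
    have hexp : ∀ i : Fin n, (‖u i‖ - (Real.sqrt n)⁻¹) ^ 2
        = ‖u i‖ ^ 2 - 2 * (Real.sqrt n)⁻¹ * ‖u i‖ + ((Real.sqrt n)⁻¹) ^ 2 :=
      fun i => by ring
    have h3 : m = (∑ i, ‖u i‖ ^ 2) - 2 * (Real.sqrt n)⁻¹ * (∑ i, ‖u i‖)
        + n * ((Real.sqrt n)⁻¹) ^ 2 := by
      rw [hmdef, Finset.sum_congr rfl fun i _ => hexp i,
        Finset.sum_add_distrib, Finset.sum_sub_distrib, ← Finset.mul_sum,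
        Finset.sum_const, Finset.card_univ, Fintype.card_fin, nsmul_eq_mul]
    rw [h3, hsumsq, h2, h1]
    have hsq : Real.sqrt n * Real.sqrt n = n := Real.mul_self_sqrt hn'.le
    field_simp
    nlinarith [Finset.sum_nonneg fun i (_ : i ∈ Finset.univ) => norm_nonneg (x i)]
  have hnormdiff : ∀ y : EuclideanSpace ℂ (Fin n),
      ‖u - y‖ = Real.sqrt (∑ i, ‖u i - y i‖ ^ 2) := by
    intro y
    rw [EuclideanSpace.norm_eq]
    congr 1
  have habs : ∀ a t b : ℝ, 0 < b → |a - t * b⁻¹| * b = |a * b - t| := by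
    intro a t b hb
    have h : |a - t * b⁻¹| * b = |(a - t * b⁻¹) * b| := by
      rw [abs_mul, abs_of_pos hb]
    rw [h, sub_mul, mul_assoc, inv_mul_cancel₀ hb.ne', mul_one]
  set y₀ : EuclideanSpace ℂ (Fin n) := WithLp.toLp 2 (fun i =>
    if x i = 0 then (((Real.sqrt n)⁻¹ : ℝ) : ℂ)
    else ((Real.sqrt n)⁻¹ * ‖x i‖⁻¹ : ℝ) • x i) with hy₀def
  have hy₀norm : ∀ i, ‖y₀ i‖ = 1 / Real.sqrt n := by
    intro i
    rw [hy₀def]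
    by_cases h : x i = 0
    · simp [h, abs_of_nonneg (inv_nonneg.2 hsn.le), one_div]
    · simp only [PiLp.toLp_apply, h, if_false, norm_smul, Real.norm_eq_abs]
      have hxi : 0 < ‖x i‖ := norm_pos_iff.2 h
      rw [abs_of_nonneg (by positivity), mul_assoc, inv_mul_cancel₀ hxi.ne',
        mul_one, one_div]
  have hy₀diff : ∀ i, ‖u i - y₀ i‖ = |‖u i‖ - (Real.sqrt n)⁻¹| := by
    intro i
    rw [hy₀def]
    by_cases h : x i = 0
    · have hui0 : u i = 0 := by simp [hu, h]
      simp [h, hui0, abs_of_nonneg (inv_nonneg.2 hsn.le), abs_of_nonpos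
        (neg_nonpos.2 (inv_nonneg.2 hsn.le))]
    · have hxi : 0 < ‖x i‖ := norm_pos_iff.2 h
      have hud : u i = (‖x‖⁻¹ : ℝ) • x i := by simp [hu]
      have key : u i - (((Real.sqrt n)⁻¹ * ‖x i‖⁻¹ : ℝ)) • x i
          = ((‖x‖⁻¹ - (Real.sqrt n)⁻¹ * ‖x i‖⁻¹ : ℝ)) • x i := by
        rw [hud, ← sub_smul]
      simp only [PiLp.toLp_apply, h, if_false, key, norm_smul, Real.norm_eq_abs, hui i]
      have h5 : ‖x‖⁻¹ - (Real.sqrt n)⁻¹ * ‖x i‖⁻¹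
          = ‖x‖⁻¹ - ((Real.sqrt n)⁻¹) * ‖x i‖⁻¹ := rfl
      rw [habs (‖x‖⁻¹) ((Real.sqrt n)⁻¹) (‖x i‖) hxi]
  have hy₀val : ‖u - y₀‖ = Real.sqrt m := by
    rw [hnormdiff y₀, hmdef]
    congr 1
    exact Finset.sum_congr rfl fun i _ => by rw [hy₀diff i, sq_abs]
  have hlbd : ∀ y : EuclideanSpace ℂ (Fin n), (∀ i, ‖y i‖ = 1 / Real.sqrt n) →
      Real.sqrt m ≤ ‖u - y‖ := by
    intro y hy
    rw [hnormdiff y]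
    apply Real.sqrt_le_sqrt
    apply Finset.sum_le_sum
    intro i _
    have h1 : |‖u i‖ - ‖y i‖| ≤ ‖u i - y i‖ := abs_norm_sub_norm_le _ _
    have h2 : ‖y i‖ = (Real.sqrt n)⁻¹ := by rw [hy i, one_div]
    rw [← h2]
    calc (‖u i‖ - ‖y i‖) ^ 2 = |‖u i‖ - ‖y i‖| ^ 2 := (sq_abs _).symm
      _ ≤ ‖u i - y i‖ ^ 2 :=
          sq_le_sq' (by linarith [abs_nonneg (‖u i‖ - ‖y i‖)]) h1
  constructor
  · rintro ⟨⟨y, hy, hd⟩, hlb⟩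
    have h1 : Real.sqrt m ≤ Real.sqrt c := by rw [hd]; exact hlbd y hy
    have h2 : Real.sqrt c ≤ Real.sqrt m := hlb ⟨y₀, hy₀norm, hy₀val.symm⟩
    have heq : Real.sqrt c = Real.sqrt m := le_antisymm h2 h1
    have hcm : c = m := by
      rw [← Real.sq_sqrt hc, ← Real.sq_sqrt hm0, heq]
    rw [hm] at hcm
    have hdiv : (∑ i, ‖x i‖) / (Real.sqrt n * ‖x‖) = 1 - c / 2 := by linarith
    have := (div_eq_iff hP.ne').1 hdiv
    rw [this]; ring
  · intro heq
    have hcm : m = c := by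
      rw [hm, heq, mul_assoc, mul_div_assoc, div_self hP.ne', mul_one]
      ring
    constructor
    · exact ⟨y₀, hy₀norm, by rw [hy₀val, hcm]⟩
    · rintro d ⟨y, hy, hd⟩
      rw [hd, ← hcm]
      exact hlbd y hy
end

section
/- Let S be a subspace of H = ℝ^n or ℂ^n, let P be the orthogonal projection onto S, and let c ∈ ℝ. Then every unit vector x ∈ S satisfies ‖x‖_1 ≤ (1 - c/2)·√n if and only if the ℓ2 distance from every unit vector in S to every constant modulus vector is at least √c. -/
open Finset

private lemma auxsq {𝕜 : Type*} [RCLike 𝕜] {n : ℕ} (hn : 0 < n)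
    (x y : EuclideanSpace 𝕜 (Fin n)) (hx : ‖x‖ = 1)
    (hy : ∀ i, ‖y i‖ = 1 / Real.sqrt n) (c : ℝ) (hc0 : 0 ≤ c) :
    Real.sqrt c ≤ ‖x - y‖ ↔ RCLike.re (inner 𝕜 x y) ≤ 1 - c / 2 := by
  have hns : (0:ℝ) < Real.sqrt n := Real.sqrt_pos.mpr (by exact_mod_cast hn)
  have hny : ‖y‖ = 1 := by
    rw [EuclideanSpace.norm_eq]
    simp only [hy]
    rw [Finset.sum_const, card_univ, Fintype.card_fin]
    rw [div_pow, one_pow, Real.sq_sqrt (by positivity)]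
    rw [nsmul_eq_mul, mul_one_div, div_self (by exact_mod_cast hn.ne'), Real.sqrt_one]
  have hsq : ‖x - y‖ ^ 2 = 2 - 2 * RCLike.re (inner 𝕜 x y) := by
    rw [@norm_sub_sq 𝕜, hx, hny]; ring
  constructor
  · intro h
    have h2 : c ≤ ‖x - y‖ ^ 2 := by
      calc c = Real.sqrt c ^ 2 := (Real.sq_sqrt hc0).symm
      _ ≤ ‖x - y‖ ^ 2 := by
        apply pow_le_pow_left₀ (Real.sqrt_nonneg _) h
    linarith
  · intro h
    have h2 : c ≤ ‖x - y‖ ^ 2 := by linarith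
    calc Real.sqrt c ≤ Real.sqrt (‖x - y‖ ^ 2) := Real.sqrt_le_sqrt h2
    _ = ‖x - y‖ := Real.sqrt_sq (norm_nonneg _)

theorem stmt5 {𝕜 : Type*} [RCLike 𝕜] {n : ℕ}
    (S : Submodule 𝕜 (EuclideanSpace 𝕜 (Fin n))) (c : ℝ) (hc0 : 0 ≤ c) (hc2 : c ≤ 2) :
    (∀ x ∈ S, ‖x‖ = 1 → (∑ i, ‖x i‖) ≤ (1 - c / 2) * Real.sqrt n) ↔
    (∀ x ∈ S, ‖x‖ = 1 → ∀ y : EuclideanSpace 𝕜 (Fin n),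
      (∀ i, ‖y i‖ = 1 / Real.sqrt n) → Real.sqrt c ≤ ‖x - y‖) := by
  constructor
  · intro h1 x hxS hx y hy
    have hx0 : x ≠ 0 := by intro h; rw [h, norm_zero] at hx; norm_num at hx
    have hn : 0 < n := by
      by_contra h
      push_neg at h
      have hn0 : n = 0 := Nat.le_zero.mp h
      subst hn0
      exact hx0 (Subsingleton.elim x 0)
    have hns : (0:ℝ) < Real.sqrt n := Real.sqrt_pos.mpr (by exact_mod_cast hn)
    rw [auxsq hn x y hx hy c hc0]
    calc RCLike.re (inner 𝕜 x y) = ∑ i, RCLike.re (inner 𝕜 (x i) (y i)) := by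
          rw [PiLp.inner_apply, map_sum]
      _ ≤ ∑ i, ‖x i‖ * ‖y i‖ := Finset.sum_le_sum fun i _ => re_inner_le_norm (𝕜 := 𝕜) (x i) (y i)
      _ = (∑ i, ‖x i‖) / Real.sqrt n := by
          simp only [hy, mul_one_div]
          rw [Finset.sum_div]
      _ ≤ 1 - c / 2 := by
          rw [div_le_iff₀ hns]
          exact h1 x hxS hx
  · intro h2 x hxS hx
    have hx0 : x ≠ 0 := by intro h; rw [h, norm_zero] at hx; norm_num at hx
    have hn : 0 < n := by
      by_contra h
      push_neg at h
      have hn0 : n = 0 := Nat.le_zero.mp h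
      subst hn0
      exact hx0 (Subsingleton.elim x 0)
    have hns : (0:ℝ) < Real.sqrt n := Real.sqrt_pos.mpr (by exact_mod_cast hn)
    set y : EuclideanSpace 𝕜 (Fin n) := WithLp.toLp 2 (fun i =>
      ((Real.sqrt n : ℝ) : 𝕜)⁻¹ * (if x i = 0 then 1 else ((‖x i‖ : ℝ) : 𝕜)⁻¹ * x i)) with hydef
    have hy : ∀ i, ‖y i‖ = 1 / Real.sqrt n := by
      intro i
      simp only [hydef, PiLp.toLp_apply]
      by_cases hxi : x i = 0
      · simp [hxi, hns.le, one_div]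
      · have hxn : (0:ℝ) < ‖x i‖ := norm_pos_iff.mpr hxi
        rw [if_neg hxi, norm_mul, norm_mul, norm_inv, norm_inv,
          RCLike.norm_ofReal, RCLike.norm_ofReal, abs_of_nonneg hns.le,
          abs_of_nonneg hxn.le, inv_mul_cancel₀ hxn.ne', mul_one, one_div]
    have key := (auxsq hn x y hx hy c hc0).mp (h2 x hxS hx y hy)
    have hre : RCLike.re (inner 𝕜 x y) = (∑ i, ‖x i‖) / Real.sqrt n := by
      rw [PiLp.inner_apply, map_sum, Finset.sum_div]
      refine Finset.sum_congr rfl fun i _ => ?_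
      rw [RCLike.inner_apply']
      by_cases hxi : x i = 0
      · simp [hydef, hxi]
      · have hxn : (0:ℝ) < ‖x i‖ := norm_pos_iff.mpr hxi
        have : (starRingEnd 𝕜) (x i) * y i = ((‖x i‖ / Real.sqrt n : ℝ) : 𝕜) := by
          rw [hydef]
          simp only [PiLp.toLp_apply, if_neg hxi]
          calc (starRingEnd 𝕜) (x i) * (((Real.sqrt n : ℝ) : 𝕜)⁻¹ * (((‖x i‖ : ℝ) : 𝕜)⁻¹ * x i))
              = ((Real.sqrt n : ℝ) : 𝕜)⁻¹ * (((‖x i‖ : ℝ) : 𝕜)⁻¹ *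
                ((starRingEnd 𝕜) (x i) * x i)) := by ring
            _ = ((Real.sqrt n : ℝ) : 𝕜)⁻¹ * (((‖x i‖ : ℝ) : 𝕜)⁻¹ * ((‖x i‖ : ℝ) : 𝕜) ^ 2) := by
                rw [RCLike.conj_mul]
            _ = ((‖x i‖ / Real.sqrt n : ℝ) : 𝕜) := by
                have h1' : ((‖x i‖ : ℝ) : 𝕜) ≠ 0 := RCLike.ofReal_ne_zero.mpr hxn.ne'
                have h2' : ((Real.sqrt n : ℝ) : 𝕜) ≠ 0 := RCLike.ofReal_ne_zero.mpr hns.ne'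
                push_cast
                field_simp
        rw [this, RCLike.ofReal_re]
    rw [hre, div_le_iff₀ hns] at key
    exact key
end

section
/- Let S be a subspace of H = ℝ^n or ℂ^n with orthogonal projection P, and let 0 ≤ c ≤ 2. Then every unit vector x ∈ S satisfies ‖x‖_1 ≤ (1 - c/2)·√n if and only if ‖Px‖_2 ≤ 1 - c/2 for every constant modulus vector x. -/
open Finset

section helper

variable {𝕜 : Type*} [RCLike 𝕜] {n : ℕ}

local notation "⟪" x ", " y "⟫" => @inner 𝕜 _ _ x y

lemma aux_inner_proj (S : Submodule 𝕜 (EuclideanSpace 𝕜 (Fin n)))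
    (x y : EuclideanSpace 𝕜 (Fin n)) (hx : x ∈ S) :
    ⟪x, (Submodule.orthogonalProjection S y : EuclideanSpace 𝕜 (Fin n))⟫ = ⟪x, y⟫ := by
  show ⟪x, S.starProjection y⟫ = _
  rw [← Submodule.inner_starProjection_left_eq_right, Submodule.starProjection_eq_self_iff.mpr hx]

end helper

theorem stmt6 {𝕜 : Type*} [RCLike 𝕜] {n : ℕ}
    (S : Submodule 𝕜 (EuclideanSpace 𝕜 (Fin n))) (c : ℝ) (hc0 : 0 ≤ c) (hc2 : c ≤ 2) :
    (∀ x ∈ S, ‖x‖ = 1 → (∑ i, ‖x i‖) ≤ (1 - c / 2) * Real.sqrt n) ↔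
    (∀ x : EuclideanSpace 𝕜 (Fin n), (∀ i, ‖x i‖ = 1 / Real.sqrt n) →
      ‖(Submodule.orthogonalProjection S x : EuclideanSpace 𝕜 (Fin n))‖ ≤ 1 - c / 2) := by
  constructor
  · intro h y hy
    set P : EuclideanSpace 𝕜 (Fin n) := (Submodule.orthogonalProjection S y : EuclideanSpace 𝕜 (Fin n)) with hPdef
    rcases Nat.eq_zero_or_pos n with hn | hn
    · have : P = 0 := PiLp.ext fun i => absurd i.2 (by omega)
      rw [this]; simp; linarith
    by_cases hP : P = 0
    · rw [hP]; simp; linarith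
    have hsq : (0:ℝ) < Real.sqrt n := Real.sqrt_pos.mpr (by exact_mod_cast hn)
    have hPn : (0:ℝ) < ‖P‖ := norm_pos_iff.mpr hP
    set x : EuclideanSpace 𝕜 (Fin n) := ((‖P‖⁻¹ : ℝ) : 𝕜) • P with hxdef
    have hxS : x ∈ S := by
      rw [hxdef, hPdef]; exact S.smul_mem _ (Submodule.orthogonalProjection S y).2
    have hxn : ‖x‖ = 1 := by
      rw [hxdef, norm_smul, RCLike.norm_ofReal, abs_of_pos (inv_pos.mpr hPn),
        inv_mul_cancel₀ hPn.ne']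
    have key := h x hxS hxn
    -- ‖P‖ = re ⟪x, y⟫
    have h1 : (inner 𝕜 x y) = inner 𝕜 x P := (aux_inner_proj S x y hxS).symm
    have h2 : RCLike.re (inner 𝕜 x P : 𝕜) = ‖P‖ := by
      rw [hxdef, inner_smul_real_left, RCLike.smul_re, inner_self_eq_norm_sq]
      field_simp
    have h3 : RCLike.re (inner 𝕜 x y) ≤ ‖(inner 𝕜 x y)‖ := RCLike.re_le_norm _
    have h4 : ‖(inner 𝕜 x y)‖ ≤ ∑ i, ‖x i‖ * ‖y i‖ := by
      rw [PiLp.inner_apply]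
      refine le_trans (norm_sum_le _ _) (Finset.sum_le_sum fun i _ => ?_)
      simp [RCLike.inner_apply, norm_mul, mul_comm]
    have h5 : ∑ i, ‖x i‖ * ‖y i‖ = (∑ i, ‖x i‖) / Real.sqrt n := by
      rw [Finset.sum_div]
      refine Finset.sum_congr rfl fun i _ => ?_
      rw [hy i]; ring
    have h6 : (∑ i, ‖x i‖) / Real.sqrt n ≤ 1 - c / 2 := by
      rw [div_le_iff₀ hsq]
      calc _ ≤ (1 - c/2) * Real.sqrt n := key
        _ = _ := by ring
    calc ‖P‖ = RCLike.re (inner 𝕜 x y) := by rw [h1, h2]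
      _ ≤ 1 - c/2 := le_trans h3 (le_trans h4 (h5 ▸ h6))
  · intro h x hxS hxn
    rcases Nat.eq_zero_or_pos n with hn | hn
    · subst hn; simp
    have hsq : (0:ℝ) < Real.sqrt n := Real.sqrt_pos.mpr (by exact_mod_cast hn)
    set y : EuclideanSpace 𝕜 (Fin n) :=
      WithLp.toLp 2 (fun i => ((Real.sqrt n)⁻¹ : ℝ) • (if x i = 0 then 1 else (‖x i‖ : 𝕜)⁻¹ * x i)) with hydef
    have hy : ∀ i, ‖y i‖ = 1 / Real.sqrt n := by
      intro i
      rw [hydef]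
      by_cases hxi : x i = 0
      · simp [hxi, norm_smul, abs_of_pos hsq, one_div]
      · have h0 : ‖x i‖ ≠ 0 := norm_ne_zero_iff.mpr hxi
        simp [hxi, norm_smul, abs_of_pos hsq, norm_inv, inv_mul_cancel₀ h0, one_div]
    have key := h y hy
    have h1 : (inner 𝕜 x y) = ((Real.sqrt n)⁻¹ * ∑ i, ‖x i‖ : ℝ) := by
      rw [PiLp.inner_apply]
      push_cast [Finset.mul_sum]
      refine Finset.sum_congr rfl fun i _ => ?_
      rw [RCLike.inner_apply, hydef, PiLp.toLp_apply, mul_comm]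
      by_cases hxi : x i = 0
      · simp [hxi]
      · have : (‖x i‖ : 𝕜) ≠ 0 := by simpa using norm_ne_zero_iff.mpr hxi
        rw [if_neg hxi]; field_simp [hxi]
        rw [RCLike.real_smul_eq_coe_mul, mul_left_comm, mul_div_assoc', RCLike.conj_mul]
        have hsn : ((Real.sqrt n : ℝ) : 𝕜) ≠ 0 := RCLike.ofReal_ne_zero.mpr hsq.ne'
        push_cast
        field_simp
    have h2 : (Real.sqrt n)⁻¹ * ∑ i, ‖x i‖ ≤ 1 - c / 2 := by
      calc (Real.sqrt n)⁻¹ * ∑ i, ‖x i‖ = RCLike.re (inner 𝕜 x y) := by rw [h1, RCLike.ofReal_re]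
        _ ≤ ‖(inner 𝕜 x y)‖ := RCLike.re_le_norm _
        _ = ‖(inner 𝕜 x ((Submodule.orthogonalProjection S y : EuclideanSpace 𝕜 (Fin n))) : 𝕜)‖ := by
            rw [aux_inner_proj S x y hxS]
        _ ≤ ‖x‖ * ‖(Submodule.orthogonalProjection S y : EuclideanSpace 𝕜 (Fin n))‖ := norm_inner_le_norm _ _
        _ ≤ 1 - c / 2 := by rw [hxn, one_mul]; exact key
    calc (∑ i, ‖x i‖) = Real.sqrt n * ((Real.sqrt n)⁻¹ * ∑ i, ‖x i‖) := by
          field_simp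
      _ ≤ Real.sqrt n * (1 - c/2) := by
          exact mul_le_mul_of_nonneg_left h2 hsq.le
      _ = (1 - c/2) * Real.sqrt n := by ring
end

section
/- Let S be an s-dimensional subspace of ℝ^n with P the orthogonal projection onto S, and let {e_1,...,e_n} be the standard orthonormal basis. If the vectors P e_1, ..., P e_n are pairwise orthogonal, then there exists a subset I ⊆ {1,...,n} with |I| = s such that P e_i = e_i for i ∈ I and P e_i = 0 for i ∉ I, so that S = span{e_i : i ∈ I}. -/
open Finset

theorem stmt8 {n s : ℕ} (S : Submodule ℝ (EuclideanSpace ℝ (Fin n)))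
    (hdim : Module.finrank ℝ S = s)
    (e : Fin n → EuclideanSpace ℝ (Fin n))
    (he : ∀ i, e i = EuclideanSpace.single i (1 : ℝ))
    (horth : ∀ i j, i ≠ j →
      inner ℝ ((Submodule.orthogonalProjectionOnto S (e i) : EuclideanSpace ℝ (Fin n)))
        ((Submodule.orthogonalProjectionOnto S (e j) : EuclideanSpace ℝ (Fin n))) = (0 : ℝ)) :
    ∃ I : Finset (Fin n), I.card = s ∧
      (∀ i ∈ I, (Submodule.orthogonalProjectionOnto S (e i) : EuclideanSpace ℝ (Fin n)) = e i) ∧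
      (∀ i ∉ I, (Submodule.orthogonalProjectionOnto S (e i) : EuclideanSpace ℝ (Fin n)) = 0) ∧
      S = Submodule.span ℝ (e '' I) := by
  classical
  set P : EuclideanSpace ℝ (Fin n) → EuclideanSpace ℝ (Fin n) :=
    fun x => (Submodule.orthogonalProjectionOnto S x : EuclideanSpace ℝ (Fin n)) with hP
  -- off-diagonal coordinates of P (e i) vanish
  have hcoord : ∀ i j, i ≠ j → P (e i) j = 0 := by
    intro i j hij
    have h1 : (inner ℝ (P (e i)) (e j) : ℝ) = inner ℝ (P (e i)) (P (e j)) := by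
      have horthmem : e j - P (e j) ∈ Sᗮ := Submodule.sub_starProjection_mem_orthogonal (K := S) (e j)
      have h0 : (inner ℝ (P (e i)) (e j - P (e j)) : ℝ) = 0 := by
        exact horthmem (P (e i)) (Submodule.orthogonalProjectionOnto S (e i)).2
      rw [inner_sub_right] at h0
      linarith
    have h2 : (inner ℝ (P (e i)) (e j) : ℝ) = P (e i) j := by
      rw [he j, EuclideanSpace.inner_single_right]
      simp
    rw [h1, horth i j hij] at h2
    exact h2.symm
  -- so P (e i) = c i • e i
  set c : Fin n → ℝ := fun i => P (e i) i with hc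
  have hPe : ∀ i, P (e i) = c i • e i := by
    intro i
    ext j
    by_cases h : i = j
    · subst h
      simp [he, EuclideanSpace.single_apply, c]
    · rw [hcoord i j h]
      simp [he, EuclideanSpace.single_apply, Ne.symm h]
  -- idempotent ⇒ c i ∈ {0,1}
  have hidem : ∀ i, c i * c i = c i := by
    intro i
    have hmem : P (e i) ∈ S := (Submodule.orthogonalProjectionOnto S (e i)).2
    have h1 : P (P (e i)) = P (e i) := by
      simp only [hP] at *; exact (Submodule.starProjection_eq_self_iff (K := S)).2 hmem
    have h2 : P (c i • e i) = c i • P (e i) := by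
      simp [hP, map_smul]
    rw [hPe i] at h1
    rw [h2, hPe i, smul_smul] at h1
    have := congrArg (fun v : EuclideanSpace ℝ (Fin n) => v i) h1
    simp only [PiLp.smul_apply, smul_eq_mul, he, EuclideanSpace.single_apply, if_pos rfl,
      mul_one] at this
    simpa [he, EuclideanSpace.single_apply] using this
  have hc01 : ∀ i, c i = 0 ∨ c i = 1 := by
    intro i
    have h := hidem i
    have : c i * (c i - 1) = 0 := by ring_nf; linarith
    rcases mul_eq_zero.mp this with h' | h'
    · exact Or.inl h'
    · exact Or.inr (by linarith)
  set I : Finset (Fin n) := Finset.univ.filter (fun i => c i = 1) with hI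
  have hmemI : ∀ i, i ∈ I ↔ c i = 1 := by
    intro i; simp [hI]
  have hfix : ∀ i ∈ I, P (e i) = e i := by
    intro i hi
    rw [hPe i, (hmemI i).1 hi, one_smul]
  have hzero : ∀ i ∉ I, P (e i) = 0 := by
    intro i hi
    have : c i = 0 := by
      rcases hc01 i with h | h
      · exact h
      · exact absurd ((hmemI i).2 h) hi
    rw [hPe i, this, zero_smul]
  -- decomposition of any vector
  have hsum : ∀ x : EuclideanSpace ℝ (Fin n), x = ∑ j, x j • e j := by
    intro x
    ext k
    rw [WithLp.ofLp_sum, Finset.sum_apply]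
    simp [he, EuclideanSpace.single_apply]
  -- span equality
  have hspan : S = Submodule.span ℝ (e '' I) := by
    apply le_antisymm
    · intro x hx
      have hxP : P x = x := (Submodule.starProjection_eq_self_iff (K := S)).2 hx
      have : x = ∑ j, x j • P (e j) := by
        conv_lhs => rw [← hxP, hsum x]
        simp [hP, map_sum, map_smul]
      rw [this]
      apply Submodule.sum_mem
      intro j _
      by_cases hj : j ∈ I
      · rw [hfix j hj]
        exact Submodule.smul_mem _ _ (Submodule.subset_span ⟨j, hj, rfl⟩)
      · rw [hzero j hj]
        simp
    · rw [Submodule.span_le]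
      rintro _ ⟨j, hj, rfl⟩
      have : P (e j) = e j := hfix j hj
      rw [← this]
      exact (Submodule.orthogonalProjectionOnto S (e j)).2
  refine ⟨I, ?_, hfix, hzero, hspan⟩
  -- cardinality
  have hli : LinearIndependent ℝ (fun i : I => e i) := by
    have hb : LinearIndependent ℝ e := by
      have := (EuclideanSpace.basisFun (Fin n) ℝ).toBasis.linearIndependent
      have heq : e = fun i => (EuclideanSpace.basisFun (Fin n) ℝ).toBasis i := by
        funext i; ext j
        simp [he, EuclideanSpace.single_apply, EuclideanSpace.basisFun_apply, Pi.single_apply, eq_comm]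
      rw [heq]
      exact this
    exact hb.comp _ Subtype.val_injective
  have hrange : Set.range (fun i : I => e i) = e '' I := by
    ext x; simp
  have := finrank_span_eq_card hli
  rw [hrange] at this
  rw [← hdim, hspan, this]
  simp
end

section
/- Let S be an s-dimensional subspace of ℝ^n, with standard orthonormal basis {e_1,...,e_n}. If ‖y‖_1 ≤ √s·‖y‖_2 for all y ∈ S, then there exists a subset I ⊆ {1,...,n} with |I| = s such that S = span{e_i : i ∈ I}. -/
open Finset RealInnerProductSpace

lemma pilp_sum_apply {n : ℕ} {α : Type*} (t : Finset α) (f : α → EuclideanSpace ℝ (Fin n)) (i : Fin n) :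
    (∑ j ∈ t, f j) i = ∑ j ∈ t, f j i := by
  induction t using Finset.cons_induction with
  | empty => simp
  | cons a t ha ih => rw [Finset.sum_cons, Finset.sum_cons, PiLp.add_apply, ih]

lemma euc_inner {n : ℕ} (x y : EuclideanSpace ℝ (Fin n)) : ⟪x, y⟫ = ∑ i, x i * y i := by
  simp [PiLp.inner_apply, RCLike.inner_apply, mul_comm]

lemma euc_normsq {n : ℕ} (x : EuclideanSpace ℝ (Fin n)) : ‖x‖^2 = ∑ i, (x i)^2 := by
  rw [← real_inner_self_eq_norm_sq, euc_inner]
  exact Finset.sum_congr rfl fun i _ => (sq (x i)).symm ▸ by ring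

lemma comb_coord {n s : ℕ} (v : Fin s → EuclideanSpace ℝ (Fin n)) (c : Fin s → ℝ) (i : Fin n) :
    (∑ j, c j • v j) i = ∑ j, c j * v j i := by
  rw [pilp_sum_apply]
  exact Finset.sum_congr rfl fun j _ => by rw [PiLp.smul_apply, smul_eq_mul]

lemma comb_normsq {n s : ℕ} (v : Fin s → EuclideanSpace ℝ (Fin n))
    (hon : ∀ j k, (∑ i, v j i * v k i) = if j = k then (1:ℝ) else 0)
    (c : Fin s → ℝ) : ‖∑ j, c j • v j‖^2 = ∑ j, (c j)^2 := by
  calc ‖∑ j, c j • v j‖^2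
      = ∑ i, (∑ j, c j * v j i)^2 := by
        rw [euc_normsq]
        exact Finset.sum_congr rfl fun i _ => by rw [comb_coord]
    _ = ∑ i, ∑ j, ∑ k, (c j * c k) * (v j i * v k i) := by
        refine Finset.sum_congr rfl fun i _ => ?_
        rw [sq, Finset.sum_mul_sum]
        exact Finset.sum_congr rfl fun j _ => Finset.sum_congr rfl fun k _ => by ring
    _ = ∑ j, ∑ k, (c j * c k) * ∑ i, (v j i * v k i) := by
        rw [Finset.sum_comm]
        refine Finset.sum_congr rfl fun j _ => ?_
        rw [Finset.sum_comm]
        exact Finset.sum_congr rfl fun k _ => (Finset.mul_sum _ _ _).symm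
    _ = ∑ j, (c j)^2 := by
        refine Finset.sum_congr rfl fun j _ => ?_
        simp [hon, mul_ite, Finset.sum_ite_eq, sq]

lemma Qle {n s : ℕ} (S : Submodule ℝ (EuclideanSpace ℝ (Fin n)))
    (v : Fin s → EuclideanSpace ℝ (Fin n))
    (hv_mem : ∀ j, v j ∈ S)
    (hon : ∀ j k, (∑ i, v j i * v k i) = if j = k then (1:ℝ) else 0)
    (h : ∀ y ∈ S, (∑ i, ‖y i‖) ≤ Real.sqrt s * ‖y‖)
    (σ : Fin n → ℝ) (hσ : ∀ i, |σ i| ≤ 1) :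
    ∑ j, (∑ i, v j i * σ i)^2 ≤ (s:ℝ) := by
  set c : Fin s → ℝ := fun j => ∑ i, v j i * σ i with hc
  set y : EuclideanSpace ℝ (Fin n) := ∑ j, c j • v j with hy
  set Q : ℝ := ∑ j, (c j)^2 with hQdef
  have hQ0 : 0 ≤ Q := Finset.sum_nonneg fun j _ => sq_nonneg _
  have hymem : y ∈ S := Submodule.sum_mem _ fun j _ => Submodule.smul_mem _ _ (hv_mem j)
  have hynorm : ‖y‖^2 = Q := comb_normsq v hon c
  have hsqrt : ‖y‖ = Real.sqrt Q := by
    rw [← hynorm, Real.sqrt_sq (norm_nonneg _)]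
  have hys : ∑ i, y i * σ i = Q := by
    calc ∑ i, y i * σ i = ∑ i, ∑ j, (c j * (v j i * σ i)) := by
          refine Finset.sum_congr rfl fun i _ => ?_
          rw [show y i = ∑ j, c j * v j i from by rw [hy, comb_coord], Finset.sum_mul]
          exact Finset.sum_congr rfl fun j _ => by ring
      _ = ∑ j, c j * ∑ i, v j i * σ i := by
          rw [Finset.sum_comm]
          exact Finset.sum_congr rfl fun j _ => (Finset.mul_sum _ _ _).symm
      _ = Q := Finset.sum_congr rfl fun j _ => (by ring : c j * c j = c j ^ 2)
  have hle1 : Q ≤ ∑ i, ‖y i‖ := by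
    rw [← hys]
    refine Finset.sum_le_sum fun i _ => ?_
    calc y i * σ i ≤ |y i * σ i| := le_abs_self _
      _ = |y i| * |σ i| := abs_mul _ _
      _ ≤ |y i| * 1 := mul_le_mul_of_nonneg_left (hσ i) (abs_nonneg _)
      _ = ‖y i‖ := by rw [mul_one, Real.norm_eq_abs]
  have hle2 : Q ≤ Real.sqrt s * Real.sqrt Q := by
    calc Q ≤ ∑ i, ‖y i‖ := hle1
      _ ≤ Real.sqrt s * ‖y‖ := h y hymem
      _ = Real.sqrt s * Real.sqrt Q := by rw [hsqrt]
  nlinarith [Real.sq_sqrt hQ0, Real.sq_sqrt (Nat.cast_nonneg s : (0:ℝ) ≤ s),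
    Real.sqrt_nonneg Q, Real.sqrt_nonneg (s:ℝ), sq_nonneg (Real.sqrt Q - Real.sqrt s)]

lemma sgn_key {n : ℕ} (i i' : Fin n) :
    ∑ ε : Fin n → Bool, ((if ε i then (1:ℝ) else -1) * (if ε i' then (1:ℝ) else -1))
      = if i = i' then (2:ℝ)^n else 0 := by
  rcases eq_or_ne i i' with rfl | hne
  · simp only [if_pos rfl]
    have : ∀ ε : Fin n → Bool, ((if ε i then (1:ℝ) else -1) * (if ε i then (1:ℝ) else -1)) = 1 := by
      intro ε; by_cases h : ε i <;> simp [h]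
    rw [Finset.sum_congr rfl fun ε _ => this ε]
    simp [Finset.card_univ]
  · rw [if_neg hne]
    apply Finset.sum_ninvolution (fun ε => Function.update ε i (!(ε i)))
    · intro ε
      have h1 : Function.update ε i (!(ε i)) i = !(ε i) := Function.update_self i _ ε
      have h2 : Function.update ε i (!(ε i)) i' = ε i' := Function.update_of_ne (Ne.symm hne) _ ε
      rw [h1, h2]
      by_cases hε : ε i <;> by_cases hε' : ε i' <;> simp [hε, hε'] <;> ring
    · intro ε _
      intro hc
      have := congrFun hc i
      rw [Function.update_self] at this
      exact Bool.not_ne_self (ε i) (by rw [this])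
    · intro ε; exact Finset.mem_univ _
    · intro ε
      funext m
      rcases eq_or_ne m i with rfl | hm
      · simp [Function.update_self]
      · simp [Function.update_of_ne hm]

lemma avg_key {n s : ℕ} (w : Fin s → Fin n → ℝ) :
    ∑ ε : Fin n → Bool, ∑ j, (∑ i, w j i * (if ε i then (1:ℝ) else -1))^2
      = (2:ℝ)^n * ∑ j, ∑ i, (w j i)^2 := by
  have step1 : ∀ ε : Fin n → Bool, ∑ j, (∑ i, w j i * (if ε i then (1:ℝ) else -1))^2
      = ∑ j, ∑ i, ∑ i', (w j i * w j i') * ((if ε i then (1:ℝ) else -1) * (if ε i' then (1:ℝ) else -1)) := by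
    intro ε
    refine Finset.sum_congr rfl fun j _ => ?_
    rw [sq, Finset.sum_mul_sum]
    exact Finset.sum_congr rfl fun i _ => Finset.sum_congr rfl fun i' _ => by ring
  rw [Finset.sum_congr rfl fun ε _ => step1 ε]
  rw [Finset.sum_comm]
  have step2 : ∀ j : Fin s, (∑ ε : Fin n → Bool, ∑ i, ∑ i', (w j i * w j i') * ((if ε i then (1:ℝ) else -1) * (if ε i' then (1:ℝ) else -1)))
      = ∑ i, (w j i)^2 * (2:ℝ)^n := by
    intro j
    rw [Finset.sum_comm]
    refine Finset.sum_congr rfl fun i _ => ?_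
    rw [Finset.sum_comm]
    have : ∀ i' : Fin n, (∑ ε : Fin n → Bool, (w j i * w j i') * ((if ε i then (1:ℝ) else -1) * (if ε i' then (1:ℝ) else -1)))
        = (w j i * w j i') * (if i = i' then (2:ℝ)^n else 0) := by
      intro i'
      rw [← Finset.mul_sum, sgn_key]
    rw [Finset.sum_congr rfl fun i' _ => this i']
    simp [mul_ite, Finset.sum_ite_eq, sq]
  rw [Finset.sum_congr rfl fun j _ => step2 j]
  rw [Finset.mul_sum]
  exact Finset.sum_congr rfl fun j _ => by rw [Finset.mul_sum]; exact Finset.sum_congr rfl fun i _ => by ring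

lemma Qeq {n s : ℕ} (S : Submodule ℝ (EuclideanSpace ℝ (Fin n)))
    (v : Fin s → EuclideanSpace ℝ (Fin n))
    (hv_mem : ∀ j, v j ∈ S)
    (hon : ∀ j k, (∑ i, v j i * v k i) = if j = k then (1:ℝ) else 0)
    (h : ∀ y ∈ S, (∑ i, ‖y i‖) ≤ Real.sqrt s * ‖y‖)
    (σ : Fin n → ℝ) (hσ : ∀ i, σ i = 1 ∨ σ i = -1) :
    ∑ j, (∑ i, v j i * σ i)^2 = (s:ℝ) := by
  classical
  have hball : ∀ ε : Fin n → Bool, ∑ j, (∑ i, v j i * (if ε i then (1:ℝ) else -1))^2 ≤ (s:ℝ) :=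
    fun ε => Qle S v hv_mem hon h _ (fun i => by by_cases hb : ε i <;> simp [hb])
  have htot : ∑ ε : Fin n → Bool, ∑ j, (∑ i, v j i * (if ε i then (1:ℝ) else -1))^2 = (2:ℝ)^n * s := by
    rw [avg_key]
    congr 1
    calc ∑ j, ∑ i, (v j i)^2 = ∑ j : Fin s, (1:ℝ) := by
          refine Finset.sum_congr rfl fun j _ => ?_
          have h1 : ∑ i, (v j i)^2 = ∑ i, v j i * v j i :=
            Finset.sum_congr rfl fun i _ => pow_two (v j i)
          rw [h1, hon j j]
          simp
      _ = s := by simp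
  have hconst : ∑ _ε : Fin n → Bool, (s:ℝ) = (2:ℝ)^n * s := by
    rw [Finset.sum_const, Finset.card_univ]
    simp [Fintype.card_fun]
  have hallEq : ∀ ε : Fin n → Bool, ∑ j, (∑ i, v j i * (if ε i then (1:ℝ) else -1))^2 = (s:ℝ) := by
    by_contra hcon
    push_neg at hcon
    obtain ⟨ε0, hε0⟩ := hcon
    have hlt := Finset.sum_lt_sum (fun ε (_ : ε ∈ univ) => hball ε)
      ⟨ε0, Finset.mem_univ _, lt_of_le_of_ne (hball ε0) hε0⟩
    rw [htot, hconst] at hlt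
    exact lt_irrefl _ hlt
  have key := hallEq (fun i => decide (σ i = 1))
  rw [← key]
  refine Finset.sum_congr rfl fun j _ => ?_
  congr 1
  refine Finset.sum_congr rfl fun i _ => ?_
  congr 1
  rcases hσ i with h1 | h1 <;> simp [h1] <;> norm_num

lemma col_orth {n s : ℕ} (S : Submodule ℝ (EuclideanSpace ℝ (Fin n)))
    (v : Fin s → EuclideanSpace ℝ (Fin n))
    (hv_mem : ∀ j, v j ∈ S)
    (hon : ∀ j k, (∑ i, v j i * v k i) = if j = k then (1:ℝ) else 0)
    (h : ∀ y ∈ S, (∑ i, ‖y i‖) ≤ Real.sqrt s * ‖y‖)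
    (k l : Fin n) (hkl : k ≠ l) : ∑ j, v j k * v j l = 0 := by
  classical
  set t : Fin s → ℝ := fun j => ∑ i, v j i with ht
  have hflip : ∀ (l' : Fin n) (j : Fin s),
      ∑ i, v j i * (if i = l' then (-1:ℝ) else 1) = t j - 2 * v j l' := by
    intro l' j
    have hpt : ∀ i, v j i * (if i = l' then (-1:ℝ) else 1)
        = v j i - (if i = l' then 2 * v j i else 0) := by
      intro i; by_cases hi : i = l' <;> simp [hi] <;> ring
    rw [Finset.sum_congr rfl fun i _ => hpt i, Finset.sum_sub_distrib]
    simp [Finset.sum_ite_eq', ht]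
  have hflip2 : ∀ j : Fin s, ∑ i, v j i * (if i = l ∨ i = k then (-1:ℝ) else 1)
      = t j - 2 * v j l - 2 * v j k := by
    intro j
    have hpt : ∀ i, v j i * (if i = l ∨ i = k then (-1:ℝ) else 1)
        = v j i - (if i = l then 2 * v j i else 0) - (if i = k then 2 * v j i else 0) := by
      intro i
      by_cases hil : i = l
      · subst hil
        have : ¬ i = k := fun hc => hkl hc.symm
        simp [this]
        ring
      · by_cases hik : i = k
        · subst hik
          simp [hil]
          ring
        · simp [hil, hik]
    rw [Finset.sum_congr rfl fun i _ => hpt i, Finset.sum_sub_distrib, Finset.sum_sub_distrib]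
    simp [Finset.sum_ite_eq', ht]
  have EA : ∑ j, (t j)^2 = (s:ℝ) := by
    have := Qeq S v hv_mem hon h (fun _ => 1) (fun i => Or.inl rfl)
    rw [← this]
    exact Finset.sum_congr rfl fun j _ => by simp [ht]
  have EB : ∑ j, (t j - 2 * v j l)^2 = (s:ℝ) := by
    have := Qeq S v hv_mem hon h (fun i => if i = l then (-1:ℝ) else 1)
      (fun i => by by_cases hi : i = l <;> simp [hi])
    rw [← this]
    exact Finset.sum_congr rfl fun j _ => by rw [hflip l j]
  have EC : ∑ j, (t j - 2 * v j k)^2 = (s:ℝ) := by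
    have := Qeq S v hv_mem hon h (fun i => if i = k then (-1:ℝ) else 1)
      (fun i => by by_cases hi : i = k <;> simp [hi])
    rw [← this]
    exact Finset.sum_congr rfl fun j _ => by rw [hflip k j]
  have ED : ∑ j, (t j - 2 * v j l - 2 * v j k)^2 = (s:ℝ) := by
    have := Qeq S v hv_mem hon h (fun i => if i = l ∨ i = k then (-1:ℝ) else 1)
      (fun i => by by_cases hi : i = l ∨ i = k <;> simp [hi])
    rw [← this]
    exact Finset.sum_congr rfl fun j _ => by rw [hflip2 j]
  have expB : ∑ j, (t j - 2 * v j l)^2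
      = ∑ j, (t j)^2 - 4 * ∑ j, t j * v j l + 4 * ∑ j, (v j l)^2 := by
    rw [Finset.mul_sum, Finset.mul_sum, ← Finset.sum_sub_distrib, ← Finset.sum_add_distrib]
    exact Finset.sum_congr rfl fun j _ => by ring
  have expC : ∑ j, (t j - 2 * v j k)^2
      = ∑ j, (t j)^2 - 4 * ∑ j, t j * v j k + 4 * ∑ j, (v j k)^2 := by
    rw [Finset.mul_sum, Finset.mul_sum, ← Finset.sum_sub_distrib, ← Finset.sum_add_distrib]
    exact Finset.sum_congr rfl fun j _ => by ring
  have expD : ∑ j, (t j - 2 * v j l - 2 * v j k)^2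
      = ∑ j, (t j)^2 - 4 * ∑ j, t j * v j l - 4 * ∑ j, t j * v j k
        + 4 * ∑ j, (v j l)^2 + 8 * ∑ j, v j k * v j l + 4 * ∑ j, (v j k)^2 := by
    rw [Finset.mul_sum, Finset.mul_sum, Finset.mul_sum, Finset.mul_sum, Finset.mul_sum,
      ← Finset.sum_sub_distrib, ← Finset.sum_sub_distrib, ← Finset.sum_add_distrib,
      ← Finset.sum_add_distrib, ← Finset.sum_add_distrib]
    exact Finset.sum_congr rfl fun j _ => by ring
  rw [expB, EA] at EB
  rw [expC, EA] at EC
  rw [expD, EA] at ED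
  linarith

lemma core {n s : ℕ} (S : Submodule ℝ (EuclideanSpace ℝ (Fin n)))
    (v : Fin s → EuclideanSpace ℝ (Fin n))
    (hv_mem : ∀ j, v j ∈ S)
    (hon : ∀ j k, (∑ i, v j i * v k i) = if j = k then (1:ℝ) else 0)
    (hspan : ∀ x ∈ S, x = ∑ j, (∑ i, v j i * x i) • v j)
    (h : ∀ y ∈ S, (∑ i, ‖y i‖) ≤ Real.sqrt s * ‖y‖) :
    ∃ I : Finset (Fin n), I.card = s ∧
      S = Submodule.span ℝ ((fun i => EuclideanSpace.single i (1:ℝ)) '' I) := by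
  classical
  set p : Fin n → ℝ := fun l => ∑ j, (v j l)^2 with hp
  have hycoord : ∀ l i : Fin n, (∑ j, (v j l) • v j) i = if i = l then p l else 0 := by
    intro l i
    rw [comb_coord]
    by_cases hi : i = l
    · subst hi
      rw [if_pos rfl, hp]
      exact Finset.sum_congr rfl fun j _ => (pow_two (v j i)).symm
    · rw [if_neg hi]
      exact col_orth S v hv_mem hon h l i (fun hc => hi hc.symm)
  have hp01 : ∀ l, p l = 0 ∨ p l = 1 := by
    intro l
    have h1 : ‖∑ j, (v j l) • v j‖^2 = p l := comb_normsq v hon _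
    have h2 : ‖∑ j, (v j l) • v j‖^2 = (p l)^2 := by
      rw [euc_normsq]
      rw [Finset.sum_congr rfl fun i (_ : i ∈ univ) => congrArg (· ^ 2) (hycoord l i)]
      simp [Finset.sum_ite_eq']
    have h3 : (p l)^2 = p l := by rw [← h2, h1]
    have h4 : p l * (p l - 1) = 0 := by nlinarith [h3]
    rcases mul_eq_zero.mp h4 with h5 | h5
    · exact Or.inl h5
    · exact Or.inr (by linarith)
  have hversor : ∀ l, p l = 1 → EuclideanSpace.single l (1:ℝ) ∈ S := by
    intro l hl
    have hy : (∑ j, (v j l) • v j) = EuclideanSpace.single l (1:ℝ) := by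
      ext i
      rw [hycoord l i, EuclideanSpace.single_apply]
      by_cases hi : i = l <;> simp [hi, hl]
    rw [← hy]
    exact Submodule.sum_mem _ fun j _ => Submodule.smul_mem _ _ (hv_mem j)
  have hzero : ∀ x ∈ S, ∀ i, p i = 0 → x i = 0 := by
    intro x hx i hpi
    have hv0 : ∀ j : Fin s, v j i = 0 := by
      intro j
      have := (Finset.sum_eq_zero_iff_of_nonneg (fun j _ => sq_nonneg (v j i))).mp hpi j (Finset.mem_univ j)
      exact pow_eq_zero_iff (two_ne_zero) |>.mp this
    have := hspan x hx
    rw [this, comb_coord]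
    exact Finset.sum_eq_zero fun j _ => by rw [hv0 j, mul_zero]
  set I : Finset (Fin n) := Finset.univ.filter (fun l => p l = 1) with hI
  have hcardR : (I.card : ℝ) = s := by
    have e1 : (I.card : ℝ) = ∑ l, if p l = 1 then (1:ℝ) else 0 := by
      rw [Finset.sum_boole, hI]
    have e2 : ∀ l, (if p l = 1 then (1:ℝ) else 0) = p l := by
      intro l
      rcases hp01 l with h5 | h5 <;> simp [h5]
    have e3 : ∑ l, p l = (s:ℝ) := by
      rw [hp, Finset.sum_comm]
      have : ∀ j : Fin s, ∑ l, (v j l)^2 = 1 := by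
        intro j
        have h1 : ∑ i, (v j i)^2 = ∑ i, v j i * v j i :=
          Finset.sum_congr rfl fun i _ => pow_two (v j i)
        rw [h1, hon j j, if_pos rfl]
      rw [Finset.sum_congr rfl fun j (_ : j ∈ univ) => this j]
      simp
    rw [e1, Finset.sum_congr rfl fun l _ => e2 l, e3]
  have hcard : I.card = s := Nat.cast_inj.mp (by rw [hcardR])
  refine ⟨I, hcard, le_antisymm ?_ ?_⟩
  · intro x hx
    have hxrep : x = ∑ i ∈ I, x i • EuclideanSpace.single i (1:ℝ) := by
      ext m
      rw [pilp_sum_apply]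
      have e4 : ∀ i ∈ I, (x i • EuclideanSpace.single i (1:ℝ)) m = if m = i then x i else 0 := by
        intro i _
        rw [PiLp.smul_apply, EuclideanSpace.single_apply, smul_eq_mul]
        by_cases hm : m = i <;> simp [hm]
      rw [Finset.sum_congr rfl e4, Finset.sum_ite_eq]
      by_cases hm : m ∈ I
      · rw [if_pos hm]
      · rw [if_neg hm]
        have hpm : p m = 0 := by
          rcases hp01 m with h5 | h5
          · exact h5
          · exact absurd (Finset.mem_filter.mpr ⟨Finset.mem_univ m, h5⟩) hm
        exact hzero x hx m hpm
    rw [hxrep]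
    exact Submodule.sum_mem _ fun i hi =>
      Submodule.smul_mem _ _ (Submodule.subset_span ⟨i, Finset.mem_coe.mpr hi, rfl⟩)
  · rw [Submodule.span_le]
    rintro x ⟨i, hiI, rfl⟩
    have : p i = 1 := (Finset.mem_filter.mp (Finset.mem_coe.mp hiI)).2
    exact hversor i this

theorem stmt9 {n s : ℕ} (S : Submodule ℝ (EuclideanSpace ℝ (Fin n)))
    (hdim : Module.finrank ℝ S = s)
    (e : Fin n → EuclideanSpace ℝ (Fin n))
    (he : ∀ i, e i = EuclideanSpace.single i (1 : ℝ))
    (h : ∀ y ∈ S, (∑ i, ‖y i‖) ≤ Real.sqrt s * ‖y‖) :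
    ∃ I : Finset (Fin n), I.card = s ∧ S = Submodule.span ℝ (e '' I) := by
  have b := (stdOrthonormalBasis ℝ S).reindex (finCongr hdim)
  set v : Fin s → EuclideanSpace ℝ (Fin n) := fun j => (b j : EuclideanSpace ℝ (Fin n)) with hv
  have hv_mem : ∀ j, v j ∈ S := fun j => (b j).2
  have hon : ∀ j k, (∑ i, v j i * v k i) = if j = k then (1:ℝ) else 0 := by
    intro j k
    rw [← euc_inner, ← Submodule.coe_inner]
    exact orthonormal_iff_ite.mp b.orthonormal j k
  have hspan : ∀ x ∈ S, x = ∑ j, (∑ i, v j i * x i) • v j := by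
    intro x hx
    have h2 : ((∑ i, b.repr ⟨x, hx⟩ i • b i : S) : EuclideanSpace ℝ (Fin n)) = x := by
      rw [b.sum_repr ⟨x, hx⟩]
    conv_lhs => rw [← h2]
    push_cast
    refine Finset.sum_congr rfl fun j _ => ?_
    congr 1
    rw [b.repr_apply_apply]
    rw [Submodule.coe_inner S (b j) ⟨x, hx⟩, euc_inner]
  obtain ⟨I, hIcard, hIspan⟩ := core S v hv_mem hon hspan h
  refine ⟨I, hIcard, ?_⟩
  rw [hIspan]
  congr 1
  exact congrArg (· '' ↑I) (funext he).symm
end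

section
/- Let P be the orthogonal projection onto a subspace of ℝ^n and suppose the vectors P e_1, ..., P e_n (images of the standard basis) are not pairwise orthogonal. Then there exist signs c_1,...,c_n ∈ {−1, 1} such that ‖P(∑_{i=1}^n c_i e_i)‖² > ∑_{i=1}^n ‖P e_i‖². -/
open Finset

noncomputable def sgn10 {n : ℕ} (s : Fin n → Bool) (i : Fin n) : ℝ := if s i then 1 else -1

lemma sgn10_sq {n : ℕ} (s : Fin n → Bool) (i : Fin n) : sgn10 s i * sgn10 s i = 1 := by
  unfold sgn10; split <;> norm_num

lemma sgn10_choice {n : ℕ} (s : Fin n → Bool) (i : Fin n) : sgn10 s i = 1 ∨ sgn10 s i = -1 := by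
  unfold sgn10; split <;> simp

lemma norm_sq_sum10 {n : ℕ} {E : Type*} [NormedAddCommGroup E] [InnerProductSpace ℝ E]
    (v : Fin n → E) (c : Fin n → ℝ) :
    ‖∑ i, c i • v i‖ ^ 2 = ∑ k, ∑ l, c k * c l * (inner ℝ (v k) (v l) : ℝ) := by
  rw [← real_inner_self_eq_norm_sq, sum_inner]
  refine Finset.sum_congr rfl fun k _ => ?_
  rw [inner_sum]
  refine Finset.sum_congr rfl fun l _ => ?_
  rw [real_inner_smul_left, real_inner_smul_right]; ring

lemma sum_sgn10_mul {n : ℕ} {i j : Fin n} (hij : i ≠ j) :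
    ∑ s : Fin n → Bool, sgn10 s i * sgn10 s j = 0 := by
  have hinv : Function.Involutive (fun s : Fin n → Bool => Function.update s i (!s i)) := by
    intro s; funext k
    by_cases hk : k = i <;> simp [Function.update, hk]
  have h1 := Equiv.sum_comp hinv.toPerm (fun s : Fin n → Bool => sgn10 s i * sgn10 s j)
  have h2 : ∀ s : Fin n → Bool,
      sgn10 (Function.update s i (!s i)) i * sgn10 (Function.update s i (!s i)) j
        = -(sgn10 s i * sgn10 s j) := by
    intro s
    have hj : Function.update s i (!s i) j = s j := Function.update_of_ne hij.symm _ _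
    have hi : Function.update s i (!s i) i = !s i := Function.update_self _ _ _
    unfold sgn10
    rw [hi, hj]
    cases s i <;> cases s j <;> simp
  have h3 : ∑ s : Fin n → Bool,
      sgn10 ((Function.Involutive.toPerm _ hinv) s) i * sgn10 ((Function.Involutive.toPerm _ hinv) s) j
        = ∑ s : Fin n → Bool, -(sgn10 s i * sgn10 s j) :=
    Finset.sum_congr rfl fun s _ => by simpa [Function.Involutive.coe_toPerm] using h2 s
  rw [h3, Finset.sum_neg_distrib] at h1
  linarith [h1]

noncomputable def G10 {n : ℕ} (a : Fin n → Fin n → ℝ) (s : Fin n → Bool) : ℝ :=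
  ∑ k, ∑ l, sgn10 s k * sgn10 s l * a k l

lemma sum_G10 {n : ℕ} (a : Fin n → Fin n → ℝ) :
    ∑ s : Fin n → Bool, G10 a s = 2 ^ n * ∑ k, a k k := by
  unfold G10
  have swap : ∑ s : Fin n → Bool, ∑ k, ∑ l, sgn10 s k * sgn10 s l * a k l
      = ∑ k, ∑ l, (∑ s : Fin n → Bool, sgn10 s k * sgn10 s l) * a k l := by
    rw [Finset.sum_comm]
    refine Finset.sum_congr rfl fun k _ => ?_
    rw [Finset.sum_comm]
    refine Finset.sum_congr rfl fun l _ => ?_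
    rw [Finset.sum_mul]
  rw [swap, Finset.mul_sum]
  refine Finset.sum_congr rfl fun k _ => ?_
  rw [Finset.sum_eq_single k]
  · have hc : ∑ s : Fin n → Bool, sgn10 s k * sgn10 s k = 2 ^ n := by
      simp only [sgn10_sq]
      simp [Finset.card_univ]
    rw [hc]
  · intro l _ hlk
    rw [sum_sgn10_mul (fun h => hlk h.symm : k ≠ l), zero_mul]
  · intro hk; exact absurd (Finset.mem_univ k) hk

lemma fourpoint10 {n : ℕ} (a : Fin n → Fin n → ℝ) {i j : Fin n} (hij : i ≠ j) :
    G10 a (fun _ => true) - G10 a (Function.update (fun _ => true) i false)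
      - G10 a (Function.update (fun _ => true) j false)
      + G10 a (Function.update (Function.update (fun _ => true) i false) j false)
      = 4 * (a i j + a j i) := by
  have e1 : ∀ k, sgn10 (fun _ : Fin n => true) k = 1 := fun k => by simp [sgn10]
  have e2 : ∀ k, sgn10 (Function.update (fun _ : Fin n => true) i false) k
      = if k = i then -1 else 1 := by
    intro k; by_cases hk : k = i <;> simp [sgn10, Function.update, hk]
  have e3 : ∀ k, sgn10 (Function.update (fun _ : Fin n => true) j false) k
      = if k = j then -1 else 1 := by
    intro k; by_cases hk : k = j <;> simp [sgn10, Function.update, hk]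
  have e4 : ∀ k, sgn10 (Function.update (Function.update (fun _ : Fin n => true) i false) j false) k
      = if k = i ∨ k = j then -1 else 1 := by
    intro k
    by_cases hk : k = j
    · simp [sgn10, Function.update, hk]
    · by_cases hk' : k = i <;> simp [sgn10, Function.update, hk, hk']
  unfold G10
  simp only [← Finset.sum_sub_distrib, ← Finset.sum_add_distrib]
  have hterm : ∀ k l : Fin n,
      sgn10 (fun _ => true) k * sgn10 (fun _ => true) l * a k l
        - sgn10 (Function.update (fun _ => true) i false) k *
            sgn10 (Function.update (fun _ => true) i false) l * a k l
        - sgn10 (Function.update (fun _ => true) j false) k *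
            sgn10 (Function.update (fun _ => true) j false) l * a k l
        + sgn10 (Function.update (Function.update (fun _ => true) i false) j false) k *
            sgn10 (Function.update (Function.update (fun _ => true) i false) j false) l * a k l
      = (if k = i then if l = j then 4 * a i j else 0 else 0)
        + (if k = j then if l = i then 4 * a j i else 0 else 0) := by
    intro k l
    rw [e1, e1, e2, e2, e3, e3, e4, e4]
    by_cases hki : k = i <;> by_cases hkj : k = j <;>
      by_cases hli : l = i <;> by_cases hlj : l = j <;>
      simp_all <;> ring
  rw [Finset.sum_congr rfl fun k _ => Finset.sum_congr rfl fun l _ => hterm k l]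
  simp [Finset.sum_add_distrib, Finset.sum_ite_eq', hij]
  ring

theorem stmt10 {n : ℕ} (S : Submodule ℝ (EuclideanSpace ℝ (Fin n)))
    (e : Fin n → EuclideanSpace ℝ (Fin n))
    (he : ∀ i, e i = EuclideanSpace.single i (1 : ℝ))
    (h : ¬ (∀ i j, i ≠ j →
      inner ℝ ((S.orthogonalProjection (e i) : EuclideanSpace ℝ (Fin n)))
        ((S.orthogonalProjection (e j) : EuclideanSpace ℝ (Fin n))) = (0 : ℝ))) :
    ∃ c : Fin n → ℝ, (∀ i, c i = 1 ∨ c i = -1) ∧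
      (∑ i, ‖(S.orthogonalProjection (e i) : EuclideanSpace ℝ (Fin n))‖ ^ 2) <
      ‖(S.orthogonalProjection (∑ i, c i • e i) : EuclideanSpace ℝ (Fin n))‖ ^ 2 := by
  classical
  push_neg at h
  obtain ⟨i, j, hij, hne⟩ := h
  by_contra hc
  push_neg at hc
  set v : Fin n → EuclideanSpace ℝ (Fin n) :=
    fun i => (S.orthogonalProjection (e i) : EuclideanSpace ℝ (Fin n)) with hv
  set a : Fin n → Fin n → ℝ := fun k l => inner ℝ (v k) (v l) with ha
  set T : ℝ := ∑ i, ‖v i‖ ^ 2 with hT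
  have hTa : T = ∑ k, a k k := by
    refine Finset.sum_congr rfl fun k _ => ?_
    rw [ha]; exact (real_inner_self_eq_norm_sq (v k)).symm
  have hle : ∀ s : Fin n → Bool, G10 a s ≤ T := by
    intro s
    have hcs := hc (sgn10 s) (fun i => sgn10_choice s i)
    have hproj : (S.orthogonalProjection (∑ i, sgn10 s i • e i) : EuclideanSpace ℝ (Fin n))
        = ∑ i, sgn10 s i • v i := by
      simp [map_sum, map_smul, hv]
    rw [hproj] at hcs
    calc G10 a s = ‖∑ i, sgn10 s i • v i‖ ^ 2 := (norm_sq_sum10 v (sgn10 s)).symm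
      _ ≤ T := hcs
  have hkey : ∀ s : Fin n → Bool, G10 a s = T := by
    intro s
    by_contra hne'
    have hlt : G10 a s < T := (hle s).lt_of_ne hne'
    have hstrict : ∑ t : Fin n → Bool, G10 a t < ∑ _t : Fin n → Bool, T :=
      Finset.sum_lt_sum (fun t _ => hle t) ⟨s, Finset.mem_univ s, hlt⟩
    rw [sum_G10 a, ← hTa] at hstrict
    have hconst : ∑ _t : Fin n → Bool, T = (2 : ℝ) ^ n * T := by
      rw [Finset.sum_const, Finset.card_univ]
      simp [nsmul_eq_mul]
    rw [hconst, hTa] at hstrict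
    exact lt_irrefl _ hstrict
  have h4 := fourpoint10 a hij
  rw [hkey, hkey, hkey, hkey] at h4
  have hsymm : a j i = a i j := real_inner_comm _ _
  apply hne
  have : a i j = 0 := by rw [hsymm] at h4; linarith
  exact this
end
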